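/- With h = p^m the largest power of the characteristic p dividing n, the restriction of Δ to im(Δ^h) is a bijection from im(Δ^h) to itself. -/

import Mathlib

theorem stmt_12 (p n m : ℕ) (hn : 0 < n) (F : Type*) [Field F] [Fintype F]
    [CharP F p] (hdvd : p ^ m ∣ n) (hndvd : ¬ p ^ (m + 1) ∣ n)
    (Δ : Module.End F (ZMod n → F))
    (hΔ : ∀ (x : ZMod n → F) (i : ZMod n), Δ x i = x (i + 1) - x i) :
    Set.BijOn Δ (LinearMap.range (Δ ^ (p ^ m)) : Set (ZMod n → F))
      (LinearMap.range (Δ ^ (p ^ m)) : Set (ZMod n → F)) := by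
  have : NeZero n := ⟨hn.ne'⟩
  have hpprime : Fact p.Prime := ⟨CharP.char_is_prime F p⟩
  -- shift operator
  set S : Module.End F (ZMod n → F) :=
    { toFun := fun x i => x (i + 1)
      map_add' := fun x y => rfl
      map_smul' := fun c x => rfl } with hS
  have hΔS : Δ = S - 1 := by
    ext x i
    simp [hΔ, hS]
  have hCharEnd : CharP (Module.End F (ZMod n → F)) p :=
    charP_of_injective_algebraMap' F (A := Module.End F (ZMod n → F)) p
  have hpow : Δ ^ (p ^ m) = S ^ (p ^ m) - 1 := by
    rw [hΔS, sub_pow_char_pow_of_commute _ _ (Commute.one_right S), one_pow]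
  -- S^t acts as shift by t
  have hSt : ∀ (t : ℕ) (x : ZMod n → F) (i : ZMod n), (S ^ t) x i = x (i + t) := by
    intro t
    induction t with
    | zero => intro x i; simp
    | succ t ih =>
      intro x i
      rw [pow_succ, Module.End.mul_apply, ih, hS]
      simp only [LinearMap.coe_mk, AddHom.coe_mk]
      congr 1
      push_cast
      ring
  set h : ℕ := p ^ m with hh
  obtain ⟨k, hk⟩ := hdvd
  have hpk : ¬ p ∣ k := by
    intro ⟨l, hl⟩
    exact hndvd ⟨l, by rw [hk, hl, pow_succ]; ring⟩
  -- key: if z ∈ range Δ^h and Δ z = 0 then z = 0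
  have key : ∀ z : ZMod n → F, z ∈ LinearMap.range (Δ ^ h) → Δ z = 0 → z = 0 := by
    intro z hz hΔz
    -- z is constant
    have hconst : ∀ i : ZMod n, z i = z 0 := by
      have hstep : ∀ i : ZMod n, z (i + 1) = z i := by
        intro i
        have := congrFun hΔz i
        rw [hΔ] at this
        simpa [sub_eq_zero] using this
      have hnat : ∀ t : ℕ, z (t : ZMod n) = z 0 := by
        intro t
        induction t with
        | zero => simp
        | succ t ih => rw [Nat.cast_succ, hstep, ih]
      intro i
      have := hnat i.val
      rwa [ZMod.natCast_val, ZMod.cast_id] at this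
    obtain ⟨w, hw⟩ := hz
    -- telescoping sum
    have hsum : ∑ j ∈ Finset.range k, z ((j * h : ℕ) : ZMod n) = 0 := by
      have hterm : ∀ j : ℕ, z ((j * h : ℕ) : ZMod n)
          = w ((((j + 1) * h : ℕ) : ZMod n)) - w ((j * h : ℕ) : ZMod n) := by
        intro j
        rw [← hw, hpow]
        simp only [LinearMap.sub_apply, Module.End.one_apply, Pi.sub_apply, hSt]
        congr 2
        push_cast
        ring
      rw [Finset.sum_congr rfl fun j _ => hterm j,
        Finset.sum_range_sub (fun j => w ((j * h : ℕ) : ZMod n))]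
      have hkh : ((k * h : ℕ) : ZMod n) = 0 := by
        rw [mul_comm, ← hk, ZMod.natCast_self]
      rw [hkh]
      simp
    have hksum : (k : F) * z 0 = 0 := by
      rw [← hsum, Finset.sum_congr rfl fun j _ => hconst _]
      simp [mul_comm]
    have hkne : (k : F) ≠ 0 := fun hc => hpk ((CharP.cast_eq_zero_iff F p k).1 hc)
    have hz0 : z 0 = 0 := by
      rcases mul_eq_zero.1 hksum with hc | hc
      · exact absurd hc hkne
      · exact hc
    funext i
    rw [hconst i, hz0]
    rfl
  -- maps to
  have hmaps : Set.MapsTo Δ (LinearMap.range (Δ ^ h) : Set (ZMod n → F))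
      (LinearMap.range (Δ ^ h) : Set (ZMod n → F)) := by
    rintro x ⟨y, rfl⟩
    refine ⟨Δ y, ?_⟩
    have : Δ ^ h * Δ = Δ * Δ ^ h := by rw [← pow_succ, ← pow_succ']
    calc (Δ ^ h) (Δ y) = (Δ ^ h * Δ) y := rfl
      _ = (Δ * Δ ^ h) y := by rw [this]
      _ = Δ ((Δ ^ h) y) := rfl
  -- inj on
  have hinj : Set.InjOn Δ (LinearMap.range (Δ ^ h) : Set (ZMod n → F)) := by
    intro x hx y hy hxy
    have hsub : x - y ∈ LinearMap.range (Δ ^ h) :=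
      Submodule.sub_mem _ hx hy
    have : Δ (x - y) = 0 := by rw [map_sub, hxy, sub_self]
    exact sub_eq_zero.1 (key (x - y) hsub this)
  exact ((Set.toFinite _).injOn_iff_bijOn_of_mapsTo hmaps).1 hinj
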